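/- Let G be a strongly connected digraph on n vertices with outdegrees d₁⁺, …, d_n⁺ and average 2-outdegrees m_i⁺ = (Σ_{(v_i,v_j)∈E} d_j⁺)/d_i⁺. For α ∈ [0,1), min_i {α d_i⁺ + (1−α) m_i⁺} ≤ λ_α(G) ≤ max_i {α d_i⁺ + (1−α) m_i⁺}. -/

import Mathlib

open Matrix Finset ENNReal

/-- The outdegree of a vertex in a digraph given by its arc relation. -/
def outDeg {V : Type*} [Fintype V] (E : V → V → Prop) [DecidableRel E] (u : V) : ℕ :=
  (Finset.univ.filter (fun v => E u v)).card

/-- The maximum outdegree. -/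
def maxOutDeg {V : Type*} [Fintype V] (E : V → V → Prop) [DecidableRel E] : ℕ :=
  Finset.univ.sup (outDeg E)

/-- A simple digraph has no loops. -/
def IsSimpleDigraph {V : Type*} (E : V → V → Prop) : Prop := ∀ v, ¬ E v v

/-- Strong connectivity: every vertex reaches every other by a directed walk. -/
def StronglyConnected {V : Type*} (E : V → V → Prop) : Prop :=
  ∀ u v, Relation.ReflTransGen E u v

/-- The A_α matrix  α D + (1-α) A  of a digraph, over ℂ. -/
noncomputable def Aalpha {V : Type*} [Fintype V] [DecidableEq V] (α : ℝ)
    (E : V → V → Prop) [DecidableRel E] : Matrix V V ℂ :=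
  (α : ℂ) • Matrix.diagonal (fun u => (outDeg E u : ℂ)) +
    ((1 - α : ℝ) : ℂ) • Matrix.of (fun u v => if E u v then (1 : ℂ) else 0)

/-- The A_α spectral radius of a digraph. -/
noncomputable def lambdaAlpha {V : Type*} [Fintype V] [DecidableEq V] (α : ℝ)
    (E : V → V → Prop) [DecidableRel E] : ℝ≥0∞ :=
  spectralRadius ℂ (Aalpha α E)

/-- The signless Laplacian matrix D + A of a digraph, over ℂ. -/
noncomputable def signlessLaplacian {V : Type*} [Fintype V] [DecidableEq V]
    (E : V → V → Prop) [DecidableRel E] : Matrix V V ℂ :=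
  Matrix.diagonal (fun u => (outDeg E u : ℂ)) +
    Matrix.of (fun u v => if E u v then (1 : ℂ) else 0)

/-- The signless Laplacian spectral radius of a digraph. -/
noncomputable def qSpec {V : Type*} [Fintype V] [DecidableEq V]
    (E : V → V → Prop) [DecidableRel E] : ℝ≥0∞ :=
  spectralRadius ℂ (signlessLaplacian E)


open scoped Matrix.Norms.L2Operator in
theorem aux_lower {V : Type*} [Fintype V] [DecidableEq V] [Nonempty V]
    (B : Matrix V V ℝ) (hB : ∀ i j, 0 ≤ B i j) (m : ℝ) (hm : 0 ≤ m)
    (hrow : ∀ i, m ≤ ∑ j, B i j) :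
    ENNReal.ofReal m ≤ spectralRadius ℂ (B.map (Complex.ofRealHom)) := by
  set C : Matrix V V ℂ := B.map (Complex.ofRealHom) with hC
  -- powers of B have nonneg entries and row sums ≥ m ^ n
  have key : ∀ n : ℕ, (∀ i j, 0 ≤ (B ^ n) i j) ∧ ∀ i, m ^ n ≤ ∑ j, (B ^ n) i j := by
    intro n
    induction n with
    | zero =>
      constructor
      · intro i j
        simp [Matrix.one_apply]
        positivity
      · intro i
        simp [Matrix.one_apply]
    | succ n ih =>
      obtain ⟨ih1, ih2⟩ := ih
      have hent : ∀ i j, 0 ≤ (B ^ (n + 1)) i j := by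
        intro i j
        rw [pow_succ', Matrix.mul_apply]
        exact Finset.sum_nonneg fun k _ => mul_nonneg (hB i k) (ih1 k j)
      refine ⟨hent, fun i => ?_⟩
      have : ∑ j, (B ^ (n + 1)) i j = ∑ k, B i k * ∑ j, (B ^ n) k j := by
        simp only [pow_succ', Matrix.mul_apply]
        rw [Finset.sum_comm]
        simp [Finset.mul_sum]
      rw [this, pow_succ]
      calc m ^ n * m ≤ m ^ n * ∑ k, B i k := by
            exact mul_le_mul_of_nonneg_left (hrow i) (pow_nonneg hm n)
        _ = ∑ k, B i k * m ^ n := by rw [Finset.mul_sum]; exact Finset.sum_congr rfl fun k _ => mul_comm _ _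
        _ ≤ ∑ k, B i k * ∑ j, (B ^ n) k j :=
            Finset.sum_le_sum fun k _ => mul_le_mul_of_nonneg_left (ih2 k) (hB i k)
  -- norm of powers
  have hCpow : ∀ n : ℕ, C ^ n = (B ^ n).map (Complex.ofRealHom) := by
    intro n
    rw [hC]
    exact (map_pow (Complex.ofRealHom.mapMatrix) B n).symm
  have hnorm : ∀ n : ℕ, m ^ n ≤ ‖C ^ n‖ := by
    intro n
    obtain ⟨h1, h2⟩ := key n
    set x : EuclideanSpace ℂ V := WithLp.toLp 2 (fun _ => 1) with hx
    have hxnorm : ‖x‖ = Real.sqrt (Fintype.card V) := by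
      rw [EuclideanSpace.norm_eq]
      simp [hx]
    have hmul := (C ^ n).l2_opNorm_mulVec x
    have hy : ∀ i, ((C ^ n) *ᵥ x) i = ((∑ j, (B ^ n) i j : ℝ) : ℂ) := by
      intro i
      rw [hCpow n]
      simp [Matrix.mulVec, dotProduct, hx]
    have hynorm : Real.sqrt (Fintype.card V) * m ^ n ≤
        ‖(EuclideanSpace.equiv V ℂ).symm ((C ^ n) *ᵥ x)‖ := by
      rw [EuclideanSpace.norm_eq]
      have : ∀ i : V, (m ^ n) ^ 2 ≤ ‖((C ^ n) *ᵥ x) i‖ ^ 2 := by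
        intro i
        have := h2 i
        rw [hy i]
        simp only [Complex.norm_real, Real.norm_eq_abs]
        have habs : m ^ n ≤ |∑ j, (B ^ n) i j| := le_trans this (le_abs_self _)
        exact pow_le_pow_left₀ (pow_nonneg hm n) habs 2
      calc Real.sqrt (Fintype.card V) * m ^ n = Real.sqrt ((Fintype.card V) * (m ^ n) ^ 2) := by
            rw [Real.sqrt_mul (by positivity), Real.sqrt_sq (pow_nonneg hm n)]
        _ ≤ _ := by
            apply Real.sqrt_le_sqrt
            calc ((Fintype.card V : ℝ)) * (m ^ n) ^ 2 = ∑ _i : V, (m ^ n) ^ 2 := by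
                  simp [Finset.sum_const, nsmul_eq_mul]
              _ ≤ ∑ i, ‖((C ^ n) *ᵥ x) i‖ ^ 2 := Finset.sum_le_sum fun i _ => this i
              _ = ∑ i, ‖((EuclideanSpace.equiv V ℂ).symm ((C ^ n) *ᵥ x)) i‖ ^ 2 := rfl
    have hcard : (0 : ℝ) < Real.sqrt (Fintype.card V) := by
      have : (0 : ℝ) < Fintype.card V := by
        exact_mod_cast Fintype.card_pos
      positivity
    have := le_trans hynorm (hmul.trans (by rw [hxnorm]))
    -- this : √card * m^n ≤ ‖C^n‖ * √card
    nlinarith [this, hcard]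
  -- Gelfand
  have hG := spectrum.pow_nnnorm_pow_one_div_tendsto_nhds_spectralRadius C
  refine ge_of_tendsto hG ?_
  filter_upwards [Filter.eventually_atTop.2 ⟨1, fun n hn => hn⟩] with n hn
  have h1 : ENNReal.ofReal m ^ n ≤ (‖C ^ n‖₊ : ℝ≥0∞) := by
    rw [← ENNReal.ofReal_pow hm, ← ENNReal.ofReal_coe_nnreal, coe_nnnorm]
    exact ENNReal.ofReal_le_ofReal (hnorm n)
  have h2 : (ENNReal.ofReal m ^ n) ^ (1 / n : ℝ) ≤ (‖C ^ n‖₊ : ℝ≥0∞) ^ (1 / n : ℝ) :=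
    ENNReal.rpow_le_rpow h1 (by positivity)
  refine le_trans (le_of_eq ?_) h2
  rw [← ENNReal.rpow_natCast (ENNReal.ofReal m) n, ← ENNReal.rpow_mul]
  rw [mul_one_div, div_self (by positivity), ENNReal.rpow_one]

theorem aux_upper {V : Type*} [Fintype V] [DecidableEq V]
    (B : Matrix V V ℝ) (hB : ∀ i j, 0 ≤ B i j) (M : ℝ)
    (hrow : ∀ i, ∑ j, B i j ≤ M) :
    spectralRadius ℂ (B.map (Complex.ofRealHom)) ≤ ENNReal.ofReal M := by
  set C : Matrix V V ℂ := B.map (Complex.ofRealHom) with hC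
  rw [spectralRadius]
  refine iSup₂_le fun μ hμ => ?_
  have hev : Module.End.HasEigenvalue (Matrix.toLin' C) μ := by
    rw [Module.End.hasEigenvalue_iff_mem_spectrum]
    have := AlgEquiv.spectrum_eq (Matrix.toLinAlgEquiv' : Matrix V V ℂ ≃ₐ[ℂ] _) C
    rw [← this] at hμ
    exact hμ
  obtain ⟨k, hk⟩ := eigenvalue_mem_ball hev
  rw [Metric.mem_closedBall, dist_eq_norm] at hk
  have h1 : ‖μ‖ ≤ ‖C k k‖ + ∑ j ∈ Finset.univ.erase k, ‖C k j‖ := by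
    calc ‖μ‖ = ‖C k k + (μ - C k k)‖ := by ring_nf
      _ ≤ ‖C k k‖ + ‖μ - C k k‖ := norm_add_le _ _
      _ ≤ _ := by linarith
  have h2 : ‖C k k‖ + ∑ j ∈ Finset.univ.erase k, ‖C k j‖ = ∑ j, ‖C k j‖ :=
    Finset.add_sum_erase _ (fun j => ‖C k j‖) (Finset.mem_univ k)
  have h3 : ∑ j, ‖C k j‖ = ∑ j, B k j := by
    refine Finset.sum_congr rfl fun j _ => ?_
    simp only [hC, Matrix.map_apply, Complex.ofRealHom_eq_coe, Complex.norm_real,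
      Real.norm_eq_abs]
    exact abs_of_nonneg (hB k j)
  have : ‖μ‖ ≤ M := by rw [h2, h3] at h1; exact h1.trans (hrow k)
  rw [← ENNReal.ofReal_coe_nnreal, coe_nnnorm]
  exact ENNReal.ofReal_le_ofReal this

theorem stmt_8 {V : Type*} [Fintype V] [DecidableEq V] [Nonempty V]
    (E : V → V → Prop) [DecidableRel E]
    (hsimple : IsSimpleDigraph E) (hsc : StronglyConnected E)
    (α : ℝ) (hα0 : 0 ≤ α) (hα1 : α < 1) :
    ENNReal.ofReal (⨅ i : V, (α * (outDeg E i : ℝ) +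
        (1 - α) * ((∑ j ∈ Finset.univ.filter (fun j => E i j), (outDeg E j : ℝ)) / (outDeg E i : ℝ))))
      ≤ lambdaAlpha α E ∧
    lambdaAlpha α E ≤
      ENNReal.ofReal (⨆ i : V, (α * (outDeg E i : ℝ) +
        (1 - α) * ((∑ j ∈ Finset.univ.filter (fun j => E i j), (outDeg E j : ℝ)) / (outDeg E i : ℝ)))) := by
  classical
  set r : V → ℝ := fun i => α * (outDeg E i : ℝ) +
      (1 - α) * ((∑ j ∈ Finset.univ.filter (fun j => E i j), (outDeg E j : ℝ)) / (outDeg E i : ℝ))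
    with hr
  rcases subsingleton_or_nontrivial V with hV | hV
  · -- singleton: the matrix is zero
    have hd : ∀ i : V, outDeg E i = 0 := by
      intro i
      rw [outDeg, Finset.card_eq_zero, Finset.filter_eq_empty_iff]
      intro v _
      have hvi : v = i := Subsingleton.elim v i
      subst hvi
      exact hsimple v
    have hA : Aalpha α E = 0 := by
      ext i j
      have hij : i = j := Subsingleton.elim i j
      simp [Aalpha, hd, ← hij, hsimple i]
    have hr0 : r = fun _ => (0 : ℝ) := by
      funext i
      simp [hr, hd i]
    have hlam : lambdaAlpha α E = 0 := by
      rw [lambdaAlpha, hA]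
      open Matrix.Norms.L2Operator in exact spectrum.spectralRadius_zero
    rw [hr0, hlam, ciInf_const, ciSup_const]
    simp
  · -- main case
    have hne : ∀ i : V, (Finset.univ.filter (fun v => E i v)).Nonempty := by
      intro i
      obtain ⟨j, hj⟩ := exists_ne i
      rcases (hsc i j).cases_head with h | ⟨c, hc, -⟩
      · exact absurd h.symm hj
      · exact ⟨c, Finset.mem_filter.2 ⟨Finset.mem_univ c, hc⟩⟩
    have hpos : ∀ i : V, 0 < (outDeg E i : ℝ) := by
      intro i
      exact_mod_cast Finset.card_pos.2 (hne i)
    have h1α : (0 : ℝ) ≤ 1 - α := by linarith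
    set B : Matrix V V ℝ := Matrix.of (fun i j =>
      ((outDeg E i : ℝ))⁻¹ * ((α * (if i = j then (outDeg E i : ℝ) else 0) +
        (1 - α) * (if E i j then 1 else 0)) * (outDeg E j : ℝ))) with hB
    have hBnn : ∀ i j, 0 ≤ B i j := by
      intro i j
      have h1 : 0 ≤ ((outDeg E i : ℝ))⁻¹ := inv_nonneg.2 (hpos i).le
      have h2 : 0 ≤ α * (if i = j then (outDeg E i : ℝ) else 0) := by
        split_ifs
        · exact mul_nonneg hα0 (hpos i).le
        · simp
      have h3 : 0 ≤ (1 - α) * (if E i j then (1 : ℝ) else 0) := by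
        split_ifs
        · exact mul_nonneg h1α zero_le_one
        · simp
      exact mul_nonneg h1 (mul_nonneg (add_nonneg h2 h3) (hpos j).le)
    have hrowsum : ∀ i, ∑ j, B i j = r i := by
      intro i
      have hsplit : ∀ j, B i j = α * (if i = j then
            (outDeg E i : ℝ) * (outDeg E j : ℝ) / (outDeg E i : ℝ) else 0)
          + (1 - α) * (if E i j then (outDeg E j : ℝ) / (outDeg E i : ℝ) else 0) := by
        intro j
        have := (hpos i).ne'
        simp only [hB, Matrix.of_apply]
        split_ifs <;> field_simp <;> ring
      rw [Finset.sum_congr rfl fun j _ => hsplit j, Finset.sum_add_distrib,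
        ← Finset.mul_sum, ← Finset.mul_sum]
      have e1 : (∑ j, if i = j then (outDeg E i : ℝ) * (outDeg E j : ℝ) / (outDeg E i : ℝ)
          else 0) = (outDeg E i : ℝ) := by
        rw [Finset.sum_ite_eq]
        simp only [Finset.mem_univ, if_true]
        field_simp
      have e2 : (∑ j, if E i j then (outDeg E j : ℝ) / (outDeg E i : ℝ) else 0) =
          (∑ j ∈ Finset.univ.filter (fun j => E i j), (outDeg E j : ℝ)) / (outDeg E i : ℝ) := by
        rw [Finset.sum_div, Finset.sum_filter]
      rw [e1, e2, hr]
    -- similarity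
    have hdz : ∀ i : V, ((outDeg E i : ℂ)) ≠ 0 := by
      intro i
      have : outDeg E i ≠ 0 := Finset.card_pos.2 (hne i) |>.ne'
      exact_mod_cast Nat.cast_ne_zero.2 this
    have hval : Matrix.diagonal (fun i : V => (outDeg E i : ℂ)) *
        Matrix.diagonal (fun i : V => ((outDeg E i : ℂ))⁻¹) = 1 := by
      rw [Matrix.diagonal_mul_diagonal]
      have : (fun i : V => (outDeg E i : ℂ) * ((outDeg E i : ℂ))⁻¹) = fun _ => (1 : ℂ) :=
        funext fun i => mul_inv_cancel₀ (hdz i)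
      rw [this, Matrix.diagonal_one]
    have hval' : Matrix.diagonal (fun i : V => ((outDeg E i : ℂ))⁻¹) *
        Matrix.diagonal (fun i : V => (outDeg E i : ℂ)) = 1 := by
      rw [Matrix.diagonal_mul_diagonal]
      have : (fun i : V => ((outDeg E i : ℂ))⁻¹ * (outDeg E i : ℂ)) = fun _ => (1 : ℂ) :=
        funext fun i => inv_mul_cancel₀ (hdz i)
      rw [this, Matrix.diagonal_one]
    set u : (Matrix V V ℂ)ˣ :=
      ⟨Matrix.diagonal (fun i : V => (outDeg E i : ℂ)),
        Matrix.diagonal (fun i : V => ((outDeg E i : ℂ))⁻¹), hval, hval'⟩ with hu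
    have hspec : lambdaAlpha α E =
        spectralRadius ℂ (((u⁻¹ : (Matrix V V ℂ)ˣ) : Matrix V V ℂ) * Aalpha α E * (u : Matrix V V ℂ)) := by
      unfold lambdaAlpha spectralRadius
      rw [spectrum.units_conjugate']
    have hconj : ((u⁻¹ : (Matrix V V ℂ)ˣ) : Matrix V V ℂ) * Aalpha α E * (u : Matrix V V ℂ) = B.map Complex.ofRealHom := by
      have huinv : ((u⁻¹ : (Matrix V V ℂ)ˣ) : Matrix V V ℂ) =
          Matrix.diagonal (fun i : V => ((outDeg E i : ℂ))⁻¹) := rfl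
      have huval : ((u : Matrix V V ℂ)) =
          Matrix.diagonal (fun i : V => (outDeg E i : ℂ)) := rfl
      ext i j
      rw [huinv, huval, Matrix.mul_diagonal, Matrix.diagonal_mul]
      simp only [Aalpha, Matrix.add_apply, Matrix.smul_apply, smul_eq_mul,
        Matrix.diagonal_apply, Matrix.of_apply, Matrix.map_apply, hB,
        Complex.ofRealHom_eq_coe]
      split_ifs <;> push_cast <;> ring
    constructor
    · rw [hspec, hconj]
      refine aux_lower B hBnn _ ?_ ?_
      · exact le_ciInf fun i => by
          rw [← hrowsum i]
          exact Finset.sum_nonneg fun j _ => hBnn i j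
      · intro i
        rw [hrowsum i]
        exact ciInf_le (Finite.bddBelow_range r) i
    · rw [hspec, hconj]
      refine aux_upper B hBnn _ fun i => ?_
      rw [hrowsum i]
      exact le_ciSup (Finite.bddAbove_range r) i
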